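/- Let p be a prime with p ≡ 1 (mod 3). Then the sum over all c in ZMod p of the square of (the sum over all x in ZMod p of χ(x³ + c)) equals 2p² − 2p. -/

import Mathlib

open Finset

private lemma shift_sum_eq_neg_one (p : ℕ) [Fact p.Prime] (hp2 : p ≠ 2) {d : ZMod p}
    (hd : d ≠ 0) :
    ∑ z : ZMod p, quadraticChar (ZMod p) z * quadraticChar (ZMod p) (z + d) = -1 := by
  have hchar2 : ringChar (ZMod p) ≠ 2 := by rw [ZMod.ringChar_zmod_n]; exact hp2
  set χ := quadraticChar (ZMod p) with hχ
  have h0 : (0 : ZMod p) ∈ (univ : Finset (ZMod p)) := mem_univ _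
  rw [← Finset.sum_erase_add _ _ h0]
  have : χ (0 : ZMod p) * χ (0 + d) = 0 := by
    simp [hχ, quadraticChar_zero]
  rw [this, add_zero]
  have hstep : ∑ z ∈ univ.erase (0 : ZMod p), χ z * χ (z + d)
      = ∑ u ∈ univ.erase (1 : ZMod p), χ u := by
    refine Finset.sum_nbij' (fun z => 1 + d * z⁻¹) (fun u => d * (u - 1)⁻¹) ?_ ?_ ?_ ?_ ?_
    · intro z hz
      simp only [mem_erase, mem_univ, and_true] at hz ⊢
      intro h
      have : d * z⁻¹ = 0 := by linear_combination h
      rcases mul_eq_zero.mp this with h' | h'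
      · exact hd h'
      · exact hz (inv_eq_zero.mp h')
    · intro u hu
      simp only [mem_erase, mem_univ, and_true] at hu ⊢
      intro h
      rcases mul_eq_zero.mp h with h' | h'
      · exact hd h'
      · exact hu (by linear_combination (sub_eq_zero.mp (inv_eq_zero.mp h')))
    · intro z hz
      simp only [mem_erase, mem_univ, and_true] at hz
      have hz' : z⁻¹ ≠ 0 := inv_ne_zero hz
      field_simp
      simp [hd]
    · intro u hu
      simp only [mem_erase, mem_univ, and_true] at hu
      have hu' : u - 1 ≠ 0 := sub_ne_zero.mpr hu
      field_simp
      ring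
    · intro z hz
      simp only [mem_erase, mem_univ, and_true] at hz
      have key : z + d = z * (1 + d * z⁻¹) := by field_simp
      rw [key, map_mul, ← mul_assoc]
      have : χ z * χ z = 1 := by
        have := quadraticChar_sq_one (F := ZMod p) hz
        rwa [sq] at this
      rw [this, one_mul]
  rw [hstep]
  have hsum : ∑ u : ZMod p, χ u = 0 := quadraticChar_sum_zero hchar2
  have h1 : (1 : ZMod p) ∈ (univ : Finset (ZMod p)) := mem_univ _
  have := Finset.sum_erase_add univ χ h1
  rw [hsum] at this
  have hχ1 : χ (1 : ZMod p) = 1 := map_one _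
  rw [hχ1] at this
  omega

private lemma pair_sum (p : ℕ) [Fact p.Prime] (hp2 : p ≠ 2) (a b : ZMod p) :
    ∑ c : ZMod p, quadraticChar (ZMod p) (c + a) * quadraticChar (ZMod p) (c + b) =
      if a = b then (p : ℤ) - 1 else -1 := by
  set χ := quadraticChar (ZMod p) with hχ
  by_cases hab : a = b
  · subst hab
    simp only [if_true]
    have : ∀ c : ZMod p, χ (c + a) * χ (c + a) = if c = -a then 0 else 1 := by
      intro c
      by_cases h : c = -a
      · simp [hχ, h, quadraticChar_zero]
      · have hne : c + a ≠ 0 := fun hc => h (by linear_combination hc)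
        have h2 := quadraticChar_sq_one (F := ZMod p) hne
        rw [sq] at h2
        rw [if_neg h]
        exact h2
    rw [Finset.sum_congr rfl fun c _ => this c]
    have h3 : ∀ c : ZMod p, (if c = -a then (0:ℤ) else 1) = 1 - (if c = -a then 1 else 0) :=
      fun c => by split <;> ring
    rw [Finset.sum_congr rfl fun c _ => h3 c, Finset.sum_sub_distrib, Finset.sum_const,
      Finset.sum_ite_eq' univ (-a) (fun _ => (1 : ℤ)), if_pos (mem_univ _), Finset.card_univ,
      ZMod.card, nsmul_eq_mul]
    ring
  · rw [if_neg hab]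
    have hd : b - a ≠ 0 := sub_ne_zero.mpr (Ne.symm hab)
    calc ∑ c : ZMod p, χ (c + a) * χ (c + b)
        = ∑ z : ZMod p, χ z * χ (z + (b - a)) := by
          refine Finset.sum_nbij' (fun c => c + a) (fun z => z - a) (fun _ _ => mem_univ _)
            (fun _ _ => mem_univ _) (fun c _ => by ring) (fun z _ => by ring) ?_
          intro c _
          ring_nf
      _ = -1 := shift_sum_eq_neg_one p hp2 hd

private lemma cube_count (p : ℕ) [Fact p.Prime] (hp3 : p % 3 = 1) (x : ZMod p) :
    (univ.filter fun y : ZMod p => y ^ 3 = x ^ 3).card = if x = 0 then 1 else 3 := by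
  have hp : p.Prime := Fact.out
  -- a primitive cube root of unity exists
  have h3 : (3 : ℕ) ∣ Fintype.card (ZMod p)ˣ := by
    rw [ZMod.card_units_eq_totient, Nat.totient_prime hp]
    have : p % 3 = 1 := hp3
    omega
  haveI : Fact (Nat.Prime 3) := ⟨by norm_num⟩
  obtain ⟨u, hu⟩ := exists_prime_orderOf_dvd_card (G := (ZMod p)ˣ) 3 h3
  have hord : orderOf (u : ZMod p) = 3 := by rw [orderOf_units, hu]
  have hζ : IsPrimitiveRoot (u : ZMod p) 3 := by
    have := IsPrimitiveRoot.orderOf (u : ZMod p)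
    rwa [hord] at this
  have hroots : (univ.filter fun y : ZMod p => y ^ 3 = 1).card = 3 := by
    have heq : (univ.filter fun y : ZMod p => y ^ 3 = 1) =
        Polynomial.nthRootsFinset 3 (1 : ZMod p) := by
      ext y
      simp [Polynomial.mem_nthRootsFinset (by norm_num : 0 < 3)]
    rw [heq, hζ.card_nthRootsFinset]
  by_cases hx : x = 0
  · subst hx
    rw [if_pos rfl]
    have : (univ.filter fun y : ZMod p => y ^ 3 = (0 : ZMod p) ^ 3) = {0} := by
      ext y
      simp [pow_eq_zero_iff (n := 3) (by norm_num)]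
    rw [this, Finset.card_singleton]
  · rw [if_neg hx]
    have hcard : (univ.filter fun y : ZMod p => y ^ 3 = x ^ 3).card
        = (univ.filter fun z : ZMod p => z ^ 3 = 1).card := by
      apply Finset.card_nbij' (fun y => y * x⁻¹) (fun z => z * x)
      · intro y hy
        simp only [mem_coe, mem_filter, mem_univ, true_and] at hy ⊢
        rw [mul_pow, hy, inv_pow, mul_inv_cancel₀ (pow_ne_zero 3 hx)]
      · intro z hz
        simp only [mem_coe, mem_filter, mem_univ, true_and] at hz ⊢
        rw [mul_pow, hz, one_mul]
      · intro y _
        field_simp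
      · intro z _
        field_simp
    rw [hcard, hroots]

theorem second_moment_cubic_family (p : ℕ) [Fact p.Prime] (hp3 : p % 3 = 1) :
    ∑ c : ZMod p, (∑ x : ZMod p, quadraticChar (ZMod p) (x ^ 3 + c)) ^ 2 =
      2 * (p : ℤ) ^ 2 - 2 * (p : ℤ) := by
  have hp : p.Prime := Fact.out
  have hp2 : p ≠ 2 := by rintro rfl; norm_num at hp3
  set χ := quadraticChar (ZMod p) with hχ
  have expand : ∑ c : ZMod p, (∑ x : ZMod p, χ (x ^ 3 + c)) ^ 2 =
      ∑ x : ZMod p, ∑ y : ZMod p, ∑ c : ZMod p, χ (c + x ^ 3) * χ (c + y ^ 3) := by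
    simp_rw [sq, Finset.sum_mul_sum]
    rw [Finset.sum_comm]
    refine Finset.sum_congr rfl fun x _ => ?_
    rw [Finset.sum_comm]
    refine Finset.sum_congr rfl fun y _ => Finset.sum_congr rfl fun c _ => ?_
    rw [add_comm (x ^ 3) c, add_comm (y ^ 3) c]
  rw [expand]
  have inner : ∀ x : ZMod p, (∑ y : ZMod p, ∑ c : ZMod p, χ (c + x ^ 3) * χ (c + y ^ 3))
      = if x = 0 then 0 else 2 * (p : ℤ) := by
    intro x
    have step1 : ∀ y : ZMod p, ∑ c : ZMod p, χ (c + x ^ 3) * χ (c + y ^ 3)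
        = (if y ^ 3 = x ^ 3 then (p : ℤ) else 0) - 1 := by
      intro y
      rw [pair_sum p hp2 (x ^ 3) (y ^ 3)]
      by_cases h : y ^ 3 = x ^ 3
      · rw [if_pos h.symm, if_pos h]
      · rw [if_neg (fun h' => h h'.symm), if_neg h]; ring
    rw [Finset.sum_congr rfl fun y _ => step1 y, Finset.sum_sub_distrib]
    rw [← Finset.sum_filter]
    rw [Finset.sum_const, Finset.sum_const, Finset.card_univ, ZMod.card]
    rw [cube_count p hp3 x]
    split_ifs with hx
    · simp
    · rw [nsmul_eq_mul, nsmul_eq_mul]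
      push_cast
      ring
  rw [Finset.sum_congr rfl fun x _ => inner x]
  have h4 : ∀ x : ZMod p, (if x = 0 then (0:ℤ) else 2 * (p:ℤ))
      = 2 * (p:ℤ) - (if x = 0 then 2 * (p:ℤ) else 0) := fun x => by split <;> ring
  rw [Finset.sum_congr rfl fun x _ => h4 x, Finset.sum_sub_distrib, Finset.sum_const,
    Finset.sum_ite_eq' univ (0 : ZMod p) (fun _ => 2 * (p:ℤ)), if_pos (mem_univ _),
    Finset.card_univ, ZMod.card, nsmul_eq_mul]
  ring
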